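/- (Asymptotic expansion of the half-line Fourier–Laplace transform.) Let ũ ∈ 𝓢(ℝ,ℂ) and define h(ζ) := ∫_{x ∈ (0,∞)} exp(−i·x·ζ) · ũ(x) dx for Im ζ ≤ 0. Then for every N ∈ ℕ there exists C_N > 0 such that for all ζ with Im ζ ≤ 0 and |ζ| ≥ 1: |h(ζ) − Σ_{j=0}^{N-1} ũ^{(j)}(0) / (i·ζ)^{j+1}| ≤ C_N · |ζ|^{−N−1}. -/

import Mathlib

open MeasureTheory Complex Filter

noncomputable def HLFD (v : SchwartzMap ℝ ℂ) : SchwartzMap ℝ ℂ := SchwartzMap.derivCLM ℝ ℂ v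

lemma HLF_norm_exp (ζ : ℂ) (x : ℝ) :
    ‖Complex.exp (-(Complex.I * x * ζ))‖ = Real.exp (x * ζ.im) := by
  rw [Complex.norm_exp]
  congr 1
  simp [Complex.mul_re, Complex.mul_im]

lemma HLF_exp_le_one {ζ : ℂ} {x : ℝ} (him : ζ.im ≤ 0) (hx : 0 ≤ x) :
    ‖Complex.exp (-(Complex.I * x * ζ))‖ ≤ 1 := by
  rw [HLF_norm_exp]
  exact Real.exp_le_one_iff.2 (mul_nonpos_of_nonneg_of_nonpos hx him)

lemma HLF_integrableOn (v : SchwartzMap ℝ ℂ) {ζ : ℂ} (him : ζ.im ≤ 0) :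
    IntegrableOn (fun x : ℝ => Complex.exp (-(Complex.I * x * ζ)) * v x) (Set.Ioi 0) := by
  refine Integrable.bdd_mul (c := 1) (v.integrable (μ := volume)).integrableOn
    ((Complex.continuous_exp.comp (by continuity)).aestronglyMeasurable) ?_
  rw [ae_restrict_iff' measurableSet_Ioi]
  exact ae_of_all _ fun x hx => HLF_exp_le_one him (le_of_lt hx)

lemma HLF_tendsto_zero (v : SchwartzMap ℝ ℂ) : Tendsto (fun x : ℝ => v x) atTop (nhds 0) :=
  (zero_at_infty v).mono_left atTop_le_cocompact

lemma HLF_step (v : SchwartzMap ℝ ℂ) {ζ : ℂ} (him : ζ.im ≤ 0) (hζ : ζ ≠ 0) :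
    ∫ x in Set.Ioi (0:ℝ), Complex.exp (-(Complex.I * x * ζ)) * v x
      = v 0 / (Complex.I * ζ) +
        (Complex.I * ζ)⁻¹ * ∫ x in Set.Ioi (0:ℝ), Complex.exp (-(Complex.I * x * ζ)) * (HLFD v) x := by
  have hIζ : Complex.I * ζ ≠ 0 := mul_ne_zero Complex.I_ne_zero hζ
  set c : ℂ := (Complex.I * ζ)⁻¹ with hc
  set F : ℝ → ℂ := fun x => -c * Complex.exp (-(Complex.I * x * ζ)) * v x with hF
  have hexp : ∀ x : ℝ, HasDerivAt (fun y : ℝ => Complex.exp (-(Complex.I * y * ζ)))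
      (-(Complex.I * ζ) * Complex.exp (-(Complex.I * x * ζ))) x := by
    intro x
    have h1 : HasDerivAt (fun y : ℝ => (y : ℂ) * (-(Complex.I * ζ))) (-(Complex.I * ζ)) x := by
      simpa using (Complex.ofRealCLM.hasDerivAt (x := x)).mul_const (-(Complex.I * ζ))
    have := h1.cexp
    simp only [mul_comm] at this ⊢
    convert this using 2 <;> ring_nf
  have hderiv : ∀ x ∈ Set.Ici (0:ℝ), HasDerivAt F
      (Complex.exp (-(Complex.I * x * ζ)) * v x +
        -c * (Complex.exp (-(Complex.I * x * ζ)) * (HLFD v) x)) x := by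
    intro x _
    have hv : HasDerivAt (fun y : ℝ => v y) ((HLFD v) x) x := by
      have := (v.differentiable x).hasDerivAt
      rwa [show (HLFD v) x = deriv (fun y : ℝ => v y) x from SchwartzMap.derivCLM_apply ℝ v x]
    have h2 := (((hexp x).const_mul (-c)).mul hv)
    have hone : (Complex.I * ζ)⁻¹ * (Complex.I * ζ) = 1 := inv_mul_cancel₀ hIζ
    refine (h2 : HasDerivAt F _ x).congr_deriv (Eq.symm ?_)
    linear_combination (-(Complex.exp (-(Complex.I * x * ζ)) * v x)) * hone
  have hint : IntegrableOn (fun x : ℝ => Complex.exp (-(Complex.I * x * ζ)) * v x +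
      -c * (Complex.exp (-(Complex.I * x * ζ)) * (HLFD v) x)) (Set.Ioi 0) :=
    (HLF_integrableOn v him).add ((HLF_integrableOn (HLFD v) him).const_mul (-c))
  have htend : Tendsto F atTop (nhds (0:ℂ)) := by
    apply squeeze_zero_norm' (a := fun x => ‖c‖ * ‖v x‖)
    · filter_upwards [eventually_ge_atTop (0:ℝ)] with x hx
      have : ‖F x‖ = ‖c‖ * ‖Complex.exp (-(Complex.I * x * ζ))‖ * ‖v x‖ := by
        simp [hF]
      rw [this]
      have h1 := HLF_exp_le_one him hx
      have h2 := mul_le_mul_of_nonneg_right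
        (mul_le_mul_of_nonneg_left h1 (norm_nonneg c)) (norm_nonneg (v x))
      simpa using h2
    · simpa using (HLF_tendsto_zero v).norm.const_mul ‖c‖
  have key := integral_Ioi_of_hasDerivAt_of_tendsto' hderiv hint htend
  have hF0 : F 0 = -c * v 0 := by simp [hF]
  rw [hF0] at key
  rw [MeasureTheory.integral_add (HLF_integrableOn v him)
    ((HLF_integrableOn (HLFD v) him).const_mul (-c)), MeasureTheory.integral_const_mul] at key
  have h3 : v 0 / (Complex.I * ζ) = c * v 0 := by
    rw [hc, div_eq_mul_inv, mul_comm]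
  rw [h3]
  linear_combination key

lemma HLF_expand (v : SchwartzMap ℝ ℂ) (N : ℕ) {ζ : ℂ} (him : ζ.im ≤ 0) (hζ : ζ ≠ 0) :
    ∫ x in Set.Ioi (0:ℝ), Complex.exp (-(Complex.I * x * ζ)) * v x
      = (∑ j ∈ Finset.range N, (HLFD^[j] v) 0 / (Complex.I * ζ) ^ (j + 1))
        + ((Complex.I * ζ) ^ N)⁻¹ *
          ∫ x in Set.Ioi (0:ℝ), Complex.exp (-(Complex.I * x * ζ)) * (HLFD^[N] v) x := by
  have hIζ : Complex.I * ζ ≠ 0 := mul_ne_zero Complex.I_ne_zero hζ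
  induction N with
  | zero => simp
  | succ n ih =>
    rw [ih, HLF_step (HLFD^[n] v) him hζ, Finset.sum_range_succ, Function.iterate_succ_apply']
    have e1 : ((Complex.I * ζ) ^ n)⁻¹ * ((HLFD^[n] v) 0 / (Complex.I * ζ))
        = (HLFD^[n] v) 0 / (Complex.I * ζ) ^ (n + 1) := by
      rw [pow_succ, div_eq_mul_inv, div_eq_mul_inv, mul_inv]
      ring
    have e2 : ∀ R : ℂ, ((Complex.I * ζ) ^ n)⁻¹ * ((Complex.I * ζ)⁻¹ * R)
        = ((Complex.I * ζ) ^ (n + 1))⁻¹ * R := by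
      intro R
      rw [pow_succ, mul_inv]
      ring
    rw [mul_add, e1, e2]
    ring

lemma HLF_iter (v : SchwartzMap ℝ ℂ) (j : ℕ) :
    iteratedDeriv j (fun y : ℝ => v y) = fun y => (HLFD^[j] v) y := by
  induction j generalizing v with
  | zero => simp [iteratedDeriv_zero]
  | succ n ih =>
    rw [iteratedDeriv_succ',
      show deriv (fun y : ℝ => v y) = fun y => (HLFD v) y from
        funext fun x => (SchwartzMap.derivCLM_apply ℝ v x).symm,
      ih (HLFD v), Function.iterate_succ_apply]

lemma HLF_bound (w : SchwartzMap ℝ ℂ) {ζ : ℂ} (him : ζ.im ≤ 0) :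
    ‖∫ x in Set.Ioi (0:ℝ), Complex.exp (-(Complex.I * x * ζ)) * w x‖
      ≤ ∫ x : ℝ, ‖w x‖ := by
  have h1 : ‖∫ x in Set.Ioi (0:ℝ), Complex.exp (-(Complex.I * x * ζ)) * w x‖
      ≤ ∫ x in Set.Ioi (0:ℝ), ‖Complex.exp (-(Complex.I * x * ζ)) * w x‖ :=
    by exact norm_integral_le_integral_norm _
  refine h1.trans (le_trans ?_ (setIntegral_le_integral (s := Set.Ioi (0:ℝ))
    (w.integrable (μ := volume)).norm (ae_of_all _ fun x => norm_nonneg _)))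
  apply integral_mono_of_nonneg (ae_of_all _ fun x => norm_nonneg _)
    (w.integrable (μ := volume)).norm.integrableOn
  rw [Filter.EventuallyLE, ae_restrict_iff' measurableSet_Ioi]
  refine ae_of_all _ fun x hx => ?_
  rw [norm_mul]
  exact mul_le_of_le_one_left (norm_nonneg _) (HLF_exp_le_one him (le_of_lt hx))

theorem halfline_fourierLaplace_asymptotic (u : SchwartzMap ℝ ℂ) :
    ∀ N : ℕ, ∃ C : ℝ, 0 < C ∧ ∀ ζ : ℂ, ζ.im ≤ 0 → 1 ≤ ‖ζ‖ →
      ‖(∫ x in Set.Ioi (0 : ℝ), Complex.exp (-(Complex.I * x * ζ)) * u x) -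
          ∑ j ∈ Finset.range N,
            iteratedDeriv j (fun y : ℝ => u y) 0 / (Complex.I * ζ) ^ (j + 1)‖
        ≤ C * ‖ζ‖ ^ (-(N : ℝ) - 1) := by
  intro N
  set M : ℝ := ∫ x : ℝ, ‖(HLFD^[N + 1] u) x‖ with hM
  have hM0 : 0 ≤ M := integral_nonneg fun x => norm_nonneg _
  refine ⟨‖(HLFD^[N] u) 0‖ + M + 1, by positivity, ?_⟩
  intro ζ him habs
  have hζ : ζ ≠ 0 := by
    intro h
    rw [h] at habs
    simp at habs
    linarith
  have hIζ : Complex.I * ζ ≠ 0 := mul_ne_zero Complex.I_ne_zero hζ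
  have hexp := HLF_expand u (N + 1) him hζ
  rw [Finset.sum_range_succ] at hexp
  have hsum : ∀ j, iteratedDeriv j (fun y : ℝ => u y) 0 = (HLFD^[j] u) 0 :=
    fun j => congrFun (HLF_iter u j) 0
  have hdiff : (∫ x in Set.Ioi (0 : ℝ), Complex.exp (-(Complex.I * x * ζ)) * u x) -
      ∑ j ∈ Finset.range N, iteratedDeriv j (fun y : ℝ => u y) 0 / (Complex.I * ζ) ^ (j + 1)
      = (HLFD^[N] u) 0 / (Complex.I * ζ) ^ (N + 1)
        + ((Complex.I * ζ) ^ (N + 1))⁻¹ *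
          ∫ x in Set.Ioi (0 : ℝ), Complex.exp (-(Complex.I * x * ζ)) * (HLFD^[N + 1] u) x := by
    rw [hexp]
    simp only [hsum]
    ring
  rw [hdiff]
  have hA0 : (0:ℝ) < ‖ζ‖ := lt_of_lt_of_le one_pos habs
  have habsIζ : ‖Complex.I * ζ‖ = ‖ζ‖ := by
    rw [norm_mul, Complex.norm_I, one_mul]
  have hpow : ‖ζ‖ ^ (-(N : ℝ) - 1) = (‖ζ‖ ^ (N + 1))⁻¹ := by
    rw [show (-(N : ℝ) - 1) = -((N + 1 : ℕ) : ℝ) by push_cast; ring,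
      Real.rpow_neg hA0.le, Real.rpow_natCast]
  rw [hpow]
  have hApow : (0:ℝ) < ‖ζ‖ ^ (N + 1) := pow_pos hA0 _
  have hterm1 : ‖(HLFD^[N] u) 0 / (Complex.I * ζ) ^ (N + 1)‖
      = ‖(HLFD^[N] u) 0‖ * (‖ζ‖ ^ (N + 1))⁻¹ := by
    rw [norm_div, norm_pow, habsIζ, div_eq_mul_inv]
  have hterm2 : ‖((Complex.I * ζ) ^ (N + 1))⁻¹ *
      ∫ x in Set.Ioi (0 : ℝ), Complex.exp (-(Complex.I * x * ζ)) * (HLFD^[N + 1] u) x‖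
      ≤ (‖ζ‖ ^ (N + 1))⁻¹ * M := by
    rw [norm_mul, norm_inv, norm_pow, habsIζ]
    exact mul_le_mul_of_nonneg_left (HLF_bound (HLFD^[N + 1] u) him) (by positivity)
  calc ‖(HLFD^[N] u) 0 / (Complex.I * ζ) ^ (N + 1)
        + ((Complex.I * ζ) ^ (N + 1))⁻¹ *
          ∫ x in Set.Ioi (0 : ℝ), Complex.exp (-(Complex.I * x * ζ)) * (HLFD^[N + 1] u) x‖
      ≤ ‖(HLFD^[N] u) 0 / (Complex.I * ζ) ^ (N + 1)‖
        + ‖((Complex.I * ζ) ^ (N + 1))⁻¹ *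
          ∫ x in Set.Ioi (0 : ℝ), Complex.exp (-(Complex.I * x * ζ)) * (HLFD^[N + 1] u) x‖ :=
        norm_add_le _ _
    _ ≤ ‖(HLFD^[N] u) 0‖ * (‖ζ‖ ^ (N + 1))⁻¹ + (‖ζ‖ ^ (N + 1))⁻¹ * M := by
        rw [hterm1]
        exact add_le_add_right hterm2 _
    _ ≤ (‖(HLFD^[N] u) 0‖ + M + 1) * (‖ζ‖ ^ (N + 1))⁻¹ := by
        have hinv : (0:ℝ) < (‖ζ‖ ^ (N + 1))⁻¹ := by positivity
        nlinarith [norm_nonneg ((HLFD^[N] u) 0)]
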